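/- Let A, B, A', B' be nonempty closed convex subsets of a normed space X. Then d_H(cconv(A∪B), cconv(A'∪B')) ≤ max{d_H(A,A'), d_H(B,B')}, where cconv denotes the closed convex hull. -/

import Mathlib

open EMetric Set
open scoped ENNReal NNReal

private lemma infEdist_convexJoin_aux
    {X : Type*} [NormedAddCommGroup X] [NormedSpace ℝ X]
    {A B A' B' : Set X} {x : X}
    (hx : x ∈ convexJoin ℝ A B) :
    infEdist x (convexJoin ℝ A' B') ≤
      max (EMetric.hausdorffEdist A A') (EMetric.hausdorffEdist B B') := by
  set r := max (EMetric.hausdorffEdist A A') (EMetric.hausdorffEdist B B') with hr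
  rcases eq_or_ne r ⊤ with h | hrt
  · simp [h]
  obtain ⟨a, ha, b, hb, u, v, hu, hv, huv, hxe⟩ := mem_convexJoin.1 hx
  refine ENNReal.le_of_forall_pos_le_add fun ε εpos hlt => ?_
  have hεpos : (0 : ℝ≥0∞) < ε := ENNReal.coe_pos.2 εpos
  have haA' : infEdist a A' < r + ε := by
    calc infEdist a A' ≤ EMetric.hausdorffEdist A A' := infEdist_le_hausdorffEdist_of_mem ha
    _ ≤ r := le_max_left _ _
    _ < r + ε := ENNReal.lt_add_right hrt hεpos.ne'
  have hbB' : infEdist b B' < r + ε := by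
    calc infEdist b B' ≤ EMetric.hausdorffEdist B B' := infEdist_le_hausdorffEdist_of_mem hb
    _ ≤ r := le_max_right _ _
    _ < r + ε := ENNReal.lt_add_right hrt hεpos.ne'
  obtain ⟨a', ha', haa'⟩ := infEdist_lt_iff.1 haA'
  obtain ⟨b', hb', hbb'⟩ := infEdist_lt_iff.1 hbB'
  have hmem : u • a' + v • b' ∈ convexJoin ℝ A' B' :=
    mem_convexJoin.2 ⟨a', ha', b', hb', u, v, hu, hv, huv, rfl⟩
  have key : edist x (u • a' + v • b') ≤ r + ε := by
    rw [← hxe]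
    calc edist (u • a + v • b) (u • a' + v • b')
        ≤ edist (u • a) (u • a') + edist (v • b) (v • b') := edist_add_add_le _ _ _ _
      _ = ‖u‖₊ • edist a a' + ‖v‖₊ • edist b b' := by rw [edist_smul₀, edist_smul₀]
      _ ≤ ‖u‖₊ • (r + ε) + ‖v‖₊ • (r + ε) := by
          gcongr <;> first | exact haa'.le | exact hbb'.le
      _ = ((‖u‖₊ : ℝ≥0∞) + ‖v‖₊) * (r + ε) := by
          simp only [ENNReal.smul_def, smul_eq_mul]; ring
      _ = r + ε := by
          have h1 : ‖u‖₊ + ‖v‖₊ = (1 : ℝ≥0) := by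
            rw [← NNReal.coe_inj]
            push_cast
            rw [Real.norm_of_nonneg hu, Real.norm_of_nonneg hv]
            exact huv
          rw [← ENNReal.coe_add, h1, ENNReal.coe_one, one_mul]
  exact le_trans (infEdist_le_edist_of_mem hmem) key

/-- For nonempty closed convex subsets `A, B, A', B'` of a normed space,
`d_H(cconv(A ∪ B), cconv(A' ∪ B')) ≤ max (d_H(A,A')) (d_H(B,B'))`, where `cconv` denotes
the closed convex hull. -/
theorem hausdorffEdist_cconv_union_le
    {X : Type*} [NormedAddCommGroup X] [NormedSpace ℝ X]
    (A B A' B' : Set X)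
    (hAne : A.Nonempty) (hBne : B.Nonempty) (hA'ne : A'.Nonempty) (hB'ne : B'.Nonempty)
    (hAcl : IsClosed A) (hBcl : IsClosed B) (hA'cl : IsClosed A') (hB'cl : IsClosed B')
    (hAco : Convex ℝ A) (hBco : Convex ℝ B) (hA'co : Convex ℝ A') (hB'co : Convex ℝ B') :
    EMetric.hausdorffEdist (closure (convexHull ℝ (A ∪ B)))
        (closure (convexHull ℝ (A' ∪ B'))) ≤
      max (EMetric.hausdorffEdist A A') (EMetric.hausdorffEdist B B') := by
  rw [show ∀ s t : Set X, EMetric.hausdorffEdist (closure s) (closure t) = EMetric.hausdorffEdist s t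
      from fun s t => EMetric.hausdorffEdist_closure, hAco.convexHull_union hBco hAne hBne,
    hA'co.convexHull_union hB'co hA'ne hB'ne]
  refine EMetric.hausdorffEdist_le_of_infEdist
    (fun x hx => infEdist_convexJoin_aux hx) (fun x hx => ?_)
  rw [show EMetric.hausdorffEdist A A' = EMetric.hausdorffEdist A' A from
    EMetric.hausdorffEdist_comm, show EMetric.hausdorffEdist B B' = EMetric.hausdorffEdist B' B from
    EMetric.hausdorffEdist_comm]
  exact infEdist_convexJoin_aux hx
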